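/- For every ε > 0 there exists a constant c = c(ε) > 0 with the following property: for every integer E ≥ 2, every toral eigenfunction f with frequency E, every radius s with E^{−1/2+ε} ≤ s ≤ 1 and every z ∈ ℝ², the nodal length satisfies ℒ_f(s,z) ≥ c·s²·√E. -/

import Mathlib

set_option maxHeartbeats 1000000

open MeasureTheory Metric

open Real intervalIntegral Complex NNReal ENNReal

noncomputable section

/-- The set of lattice points on the circle of radius `√E`. -/
def latticeE (E : ℕ) : Finset (ℤ × ℤ) :=
  ((Finset.Icc (-(E : ℤ)) (E : ℤ)) ×ˢ (Finset.Icc (-(E : ℤ)) (E : ℤ))).filter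
    (fun ξ => ξ.1 ^ 2 + ξ.2 ^ 2 = (E : ℤ))

/-- A toral eigenfunction with frequency `E`: a real-valued trigonometric polynomial
`f(x) = ∑_{‖ξ‖² = E} a_ξ e^{2πi⟨ξ,x⟩}` with `a_{-ξ} = conj (a_ξ)` and not all
coefficients zero. -/
def IsToralEigenfunction (E : ℕ) (f : EuclideanSpace ℝ (Fin 2) → ℝ) : Prop :=
  ∃ a : ℤ × ℤ → ℂ,
    (∀ ξ : ℤ × ℤ, a (-ξ) = starRingEnd ℂ (a ξ)) ∧
    (∃ ξ ∈ latticeE E, a ξ ≠ 0) ∧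
    ∀ x : EuclideanSpace ℝ (Fin 2),
      (f x : ℂ) = ∑ ξ ∈ latticeE E,
        a ξ * Complex.exp (2 * Real.pi * Complex.I *
          ((ξ.1 : ℂ) * (x 0 : ℂ) + (ξ.2 : ℂ) * (x 1 : ℂ)))

private lemma mono_aux {F F' : ℝ → ℝ} (hF : ∀ x, HasDerivAt F (F' x) x)
    (h0 : F 0 = 0) (hd : ∀ x, 0 ≤ x → 0 ≤ F' x) : ∀ x, 0 ≤ x → 0 ≤ F x := by
  intro x hx
  have hmono : MonotoneOn F (Set.Ici 0) := by
    apply monotoneOn_of_deriv_nonneg (convex_Ici 0)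
    · exact fun y _ => (hF y).differentiableAt.continuousAt.continuousWithinAt
    · exact fun y _ => (hF y).differentiableAt.differentiableWithinAt
    · intro y hy
      rw [(hF y).deriv]
      refine hd y (le_of_lt ?_)
      simpa using hy
  calc (0:ℝ) = F 0 := h0.symm
  _ ≤ F x := hmono (by simp) hx hx

private lemma cos_ge_quartic' : ∀ x : ℝ, 0 ≤ x → 1 - x^2/2 ≤ Real.cos x := by
  have h := mono_aux (F := fun x => Real.cos x - (1 - x^2/2)) (F' := fun x => x - Real.sin x)
    (fun x => by
      have := (Real.hasDerivAt_cos x).sub (((hasDerivAt_id x).pow 2).div_const 2|>.const_sub 1)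
      refine this.congr_deriv ?_
      simp only [id_eq]
      ring)
    (by simp)
    (fun x hx => by simpa using Real.sin_le hx)
  intro x hx
  linarith [h x hx]

private lemma sin_ge_cubic' : ∀ x : ℝ, 0 ≤ x → x - x^3/6 ≤ Real.sin x := by
  have h := mono_aux (F := fun x => Real.sin x - (x - x^3/6))
    (F' := fun x => Real.cos x - (1 - x^2/2))
    (fun x => by
      have := (Real.hasDerivAt_sin x).sub ((hasDerivAt_id x).sub (((hasDerivAt_id x).pow 3).div_const 6))
      refine this.congr_deriv ?_
      simp only [id_eq]
      ring)
    (by simp)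
    (fun x hx => by linarith [cos_ge_quartic' x hx])
  intro x hx
  linarith [h x hx]

private lemma cos_le_quartic' : ∀ x : ℝ, 0 ≤ x → Real.cos x ≤ 1 - x^2/2 + x^4/24 := by
  have h := mono_aux (F := fun x => (1 - x^2/2 + x^4/24) - Real.cos x)
    (F' := fun x => Real.sin x - (x - x^3/6))
    (fun x => by
      have := ((((hasDerivAt_id x).pow 2).div_const 2 |>.const_sub 1).add
        (((hasDerivAt_id x).pow 4).div_const 24)).sub (Real.hasDerivAt_cos x)
      refine this.congr_deriv ?_
      simp only [id_eq]
      ring)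
    (by simp)
    (fun x hx => by linarith [sin_ge_cubic' x hx])
  intro x hx
  linarith [h x hx]

private lemma sin_le_quintic' : ∀ x : ℝ, 0 ≤ x → Real.sin x ≤ x - x^3/6 + x^5/120 := by
  have h := mono_aux (F := fun x => (x - x^3/6 + x^5/120) - Real.sin x)
    (F' := fun x => (1 - x^2/2 + x^4/24) - Real.cos x)
    (fun x => by
      have := (((hasDerivAt_id x).sub (((hasDerivAt_id x).pow 3).div_const 6)).add
        (((hasDerivAt_id x).pow 5).div_const 120)).sub (Real.hasDerivAt_sin x)
      refine this.congr_deriv ?_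
      simp only [id_eq]
      ring)
    (by simp)
    (fun x hx => by linarith [cos_le_quartic' x hx])
  intro x hx
  linarith [h x hx]

private lemma cos_ge_sextic' : ∀ x : ℝ, 0 ≤ x → 1 - x^2/2 + x^4/24 - x^6/720 ≤ Real.cos x := by
  have h := mono_aux (F := fun x => Real.cos x - (1 - x^2/2 + x^4/24 - x^6/720))
    (F' := fun x => (x - x^3/6 + x^5/120) - Real.sin x)
    (fun x => by
      have := (Real.hasDerivAt_cos x).sub (((((hasDerivAt_id x).pow 2).div_const 2 |>.const_sub 1).add
        (((hasDerivAt_id x).pow 4).div_const 24)).sub (((hasDerivAt_id x).pow 6).div_const 720))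
      refine this.congr_deriv ?_
      simp only [id_eq]
      ring)
    (by simp)
    (fun x hx => by linarith [sin_le_quintic' x hx])
  intro x hx
  linarith [h x hx]

private lemma sin_ge_septic' : ∀ x : ℝ, 0 ≤ x → x - x^3/6 + x^5/120 - x^7/5040 ≤ Real.sin x := by
  have h := mono_aux (F := fun x => Real.sin x - (x - x^3/6 + x^5/120 - x^7/5040))
    (F' := fun x => Real.cos x - (1 - x^2/2 + x^4/24 - x^6/720))
    (fun x => by
      have := (Real.hasDerivAt_sin x).sub ((((hasDerivAt_id x).sub
        (((hasDerivAt_id x).pow 3).div_const 6)).add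
        (((hasDerivAt_id x).pow 5).div_const 120)).sub (((hasDerivAt_id x).pow 7).div_const 5040))
      refine this.congr_deriv ?_
      simp only [id_eq]
      ring)
    (by simp)
    (fun x hx => by linarith [cos_ge_sextic' x hx])
  intro x hx
  linarith [h x hx]

private lemma cos_le_P8 : ∀ x : ℝ, Real.cos x ≤ 1 - x^2/2 + x^4/24 - x^6/720 + x^8/40320 := by
  have key : ∀ x : ℝ, 0 ≤ x → Real.cos x ≤ 1 - x^2/2 + x^4/24 - x^6/720 + x^8/40320 := by
    have h := mono_aux (F := fun x => (1 - x^2/2 + x^4/24 - x^6/720 + x^8/40320) - Real.cos x)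
      (F' := fun x => Real.sin x - (x - x^3/6 + x^5/120 - x^7/5040))
      (fun x => by
        have := ((((((hasDerivAt_id x).pow 2).div_const 2 |>.const_sub 1).add
          (((hasDerivAt_id x).pow 4).div_const 24)).sub
          (((hasDerivAt_id x).pow 6).div_const 720)).add
          (((hasDerivAt_id x).pow 8).div_const 40320)).sub (Real.hasDerivAt_cos x)
        refine this.congr_deriv ?_
        simp only [id_eq]
        ring)
      (by simp)
      (fun x hx => by linarith [sin_ge_septic' x hx])
    intro x hx
    linarith [h x hx]
  intro x
  rcases le_total 0 x with hx | hx
  · exact key x hx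
  · have := key (-x) (by linarith)
    rw [Real.cos_neg] at this
    calc Real.cos x ≤ 1 - (-x)^2/2 + (-x)^4/24 - (-x)^6/720 + (-x)^8/40320 := this
    _ = 1 - x^2/2 + x^4/24 - x^6/720 + x^8/40320 := by ring

private lemma i_cos0 : (∫ θ in (0:ℝ)..(2*π), Real.cos θ ^ 0) = 2*π := by simp

private lemma i_cos2 : (∫ θ in (0:ℝ)..(2*π), Real.cos θ ^ 2) = π := by
  rw [integral_cos_sq]
  simp [Real.sin_two_pi]

private lemma i_cos4 : (∫ θ in (0:ℝ)..(2*π), Real.cos θ ^ 4) = 3*π/4 := by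
  have h := integral_cos_pow (a := 0) (b := 2*π) 2
  rw [i_cos2] at h
  norm_num [Real.sin_two_pi] at h
  linarith

private lemma i_cos6 : (∫ θ in (0:ℝ)..(2*π), Real.cos θ ^ 6) = 5*π/8 := by
  have h := integral_cos_pow (a := 0) (b := 2*π) 4
  rw [i_cos4] at h
  norm_num [Real.sin_two_pi] at h
  linarith

private lemma i_cos8 : (∫ θ in (0:ℝ)..(2*π), Real.cos θ ^ 8) = 35*π/64 := by
  have h := integral_cos_pow (a := 0) (b := 2*π) 6
  rw [i_cos6] at h
  norm_num [Real.sin_two_pi] at h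
  linarith

private lemma intInt (g : ℝ → ℝ) (hg : Continuous g) :
    IntervalIntegrable g MeasureTheory.volume 0 (2*π) := hg.intervalIntegrable 0 (2*π)

private lemma key_neg : (∫ θ in (0:ℝ)..(2*π), Real.cos (3 * Real.cos θ)) < 0 := by
  have h2π : (0:ℝ) ≤ 2*π := by positivity
  have hle : (∫ θ in (0:ℝ)..(2*π), Real.cos (3 * Real.cos θ))
      ≤ ∫ θ in (0:ℝ)..(2*π),
        (1 + (-9/2)*Real.cos θ^2 + (27/8)*Real.cos θ^4 + (-81/80)*Real.cos θ^6
          + (6561/40320)*Real.cos θ^8) := by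
    apply intervalIntegral.integral_mono_on h2π
    · exact intInt _ (by fun_prop)
    · exact intInt _ (by fun_prop)
    · intro θ _
      have := cos_le_P8 (3 * Real.cos θ)
      calc Real.cos (3 * Real.cos θ)
          ≤ 1 - (3*Real.cos θ)^2/2 + (3*Real.cos θ)^4/24 - (3*Real.cos θ)^6/720
            + (3*Real.cos θ)^8/40320 := this
        _ = 1 + (-9/2)*Real.cos θ^2 + (27/8)*Real.cos θ^4 + (-81/80)*Real.cos θ^6
            + (6561/40320)*Real.cos θ^8 := by ring
  have heval : (∫ θ in (0:ℝ)..(2*π),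
      (1 + (-9/2)*Real.cos θ^2 + (27/8)*Real.cos θ^4 + (-81/80)*Real.cos θ^6
        + (6561/40320)*Real.cos θ^8))
      = 2*π + (-9/2)*π + (27/8)*(3*π/4) + (-81/80)*(5*π/8) + (6561/40320)*(35*π/64) := by
    rw [intervalIntegral.integral_add (intInt _ (by fun_prop)) (intInt _ (by fun_prop)),
        intervalIntegral.integral_add (intInt _ (by fun_prop)) (intInt _ (by fun_prop)),
        intervalIntegral.integral_add (intInt _ (by fun_prop)) (intInt _ (by fun_prop)),
        intervalIntegral.integral_add (intInt _ (by fun_prop)) (intInt _ (by fun_prop)),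
        intervalIntegral.integral_const_mul, intervalIntegral.integral_const_mul,
        intervalIntegral.integral_const_mul, intervalIntegral.integral_const_mul,
        i_cos2, i_cos4, i_cos6, i_cos8]
    simp
  rw [heval] at hle
  nlinarith [Real.pi_pos]

noncomputable def Kc (t : ℝ) : ℂ :=
  ∫ θ in (0:ℝ)..(2*π), Complex.exp (Complex.I * ((t * Real.cos θ : ℝ) : ℂ))

private lemma rot_lemma (α β : ℝ) :
    (∫ θ in (0:ℝ)..(2*π), Complex.exp (Complex.I * ((α * Real.cos θ + β * Real.sin θ : ℝ) : ℂ)))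
      = Kc (Real.sqrt (α^2 + β^2)) := by
  by_cases h0 : α = 0 ∧ β = 0
  · obtain ⟨h1, h2⟩ := h0
    subst h1; subst h2
    unfold Kc
    norm_num
  · set w : ℂ := ⟨α, β⟩ with hw
    have hwne : w ≠ 0 := by
      simp only [hw, ne_eq, Complex.ext_iff, Complex.zero_re, Complex.zero_im]
      tauto
    set R := ‖w‖ with hR
    set φ := Complex.arg w with hφ
    have hcos : R * Real.cos φ = α := by
      have habs : ‖w‖ ≠ 0 := by simpa using hwne
      rw [hR, hφ, Complex.cos_arg hwne]
      field_simp
      rfl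
    have hsin : R * Real.sin φ = β := by
      have habs : ‖w‖ ≠ 0 := by simpa using hwne
      rw [hR, hφ, Complex.sin_arg]
      field_simp
      rfl
    have hRval : R = Real.sqrt (α^2 + β^2) := by
      rw [hR, Complex.norm_def, Complex.normSq_mk]
      ring_nf
    have hptw : ∀ θ : ℝ, (α * Real.cos θ + β * Real.sin θ : ℝ)
        = R * Real.cos (θ - φ) := by
      intro θ
      rw [Real.cos_sub, ← hcos, ← hsin]
      ring
    have hre : (∫ θ in (0:ℝ)..(2*π), Complex.exp (Complex.I * ((α * Real.cos θ + β * Real.sin θ : ℝ) : ℂ)))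
        = ∫ θ in (0:ℝ)..(2*π), (fun x => Complex.exp (Complex.I * ((R * Real.cos x : ℝ) : ℂ))) (θ - φ) := by
      apply intervalIntegral.integral_congr
      intro θ _
      simp only [hptw θ]
    rw [hre, intervalIntegral.integral_comp_sub_right (fun x => Complex.exp (Complex.I * ((R * Real.cos x : ℝ) : ℂ))) φ]
    have hper : Function.Periodic (fun x => Complex.exp (Complex.I * ((R * Real.cos x : ℝ) : ℂ))) (2*π) := by
      intro x
      simp [Real.cos_add_two_pi]
    rw [show (0:ℝ) - φ = -φ by ring, show 2*π - φ = -φ + 2*π by ring,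
        hper.intervalIntegral_add_eq (-φ) 0]
    rw [Kc, hRval]
    norm_num

private lemma Kc3_re_neg : (Kc 3).re < 0 := by
  have hint : IntervalIntegrable (fun θ => Complex.exp (Complex.I * ((3 * Real.cos θ : ℝ) : ℂ)))
      MeasureTheory.volume 0 (2*π) := by
    apply Continuous.intervalIntegrable
    fun_prop
  have h := Complex.reCLM.intervalIntegral_comp_comm hint
  have : (Kc 3).re = ∫ θ in (0:ℝ)..(2*π), Real.cos (3 * Real.cos θ) := by
    rw [Kc, ← Complex.reCLM_apply, ← h]
    apply intervalIntegral.integral_congr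
    intro θ _
    simp only [Complex.reCLM_apply]
    rw [mul_comm, Complex.exp_ofReal_mul_I_re]
  rw [this]
  exact key_neg

noncomputable def pt (z : EuclideanSpace ℝ (Fin 2)) (r θ : ℝ) : EuclideanSpace ℝ (Fin 2) :=
  WithLp.toLp 2 ![z 0 + r * Real.cos θ, z 1 + r * Real.sin θ]

@[simp] lemma pt_apply0 (z : EuclideanSpace ℝ (Fin 2)) (r θ : ℝ) :
    pt z r θ 0 = z 0 + r * Real.cos θ := rfl

@[simp] lemma pt_apply1 (z : EuclideanSpace ℝ (Fin 2)) (r θ : ℝ) :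
    pt z r θ 1 = z 1 + r * Real.sin θ := rfl

lemma dist_pt (z : EuclideanSpace ℝ (Fin 2)) (r θ : ℝ) :
    dist (pt z r θ) z = |r| := by
  rw [EuclideanSpace.dist_eq]
  rw [Fin.sum_univ_two]
  simp only [pt_apply0, pt_apply1, Real.dist_eq]
  have : |z 0 + r * Real.cos θ - z 0| ^ 2 + |z 1 + r * Real.sin θ - z 1| ^ 2 = r ^ 2 := by
    rw [_root_.sq_abs, _root_.sq_abs]
    have := Real.sin_sq_add_cos_sq θ
    nlinarith [this]
  rw [this, Real.sqrt_sq_eq_abs]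

lemma latticeE_norm {E : ℕ} {ξ : ℤ × ℤ} (hξ : ξ ∈ latticeE E) :
    ((ξ.1 : ℝ))^2 + ((ξ.2 : ℝ))^2 = (E : ℝ) := by
  rw [latticeE, Finset.mem_filter] at hξ
  have := hξ.2
  exact_mod_cast congrArg (fun n : ℤ => (n : ℝ)) this

section CircleAvg

variable {E : ℕ} {a : ℤ × ℤ → ℂ} {f : EuclideanSpace ℝ (Fin 2) → ℝ}

lemma circle_avg
    (hf : ∀ x : EuclideanSpace ℝ (Fin 2),
      (f x : ℂ) = ∑ ξ ∈ latticeE E, a ξ * Complex.exp (2 * Real.pi * Complex.I *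
        ((ξ.1 : ℂ) * (x 0 : ℂ) + (ξ.2 : ℂ) * (x 1 : ℂ))))
    (z : EuclideanSpace ℝ (Fin 2)) (r : ℝ) (hr : 0 ≤ r) :
    ((∫ θ in (0:ℝ)..(2*π), f (pt z r θ) : ℝ) : ℂ)
      = (f z : ℂ) * Kc (2*π*r*Real.sqrt E) := by
  rw [← intervalIntegral.integral_ofReal]
  have step1 : (∫ θ in (0:ℝ)..(2*π), ((f (pt z r θ) : ℝ) : ℂ))
      = ∫ θ in (0:ℝ)..(2*π), ∑ ξ ∈ latticeE E,
          (a ξ * Complex.exp (2 * Real.pi * Complex.I * ((ξ.1 : ℂ) * (z 0 : ℂ) + (ξ.2 : ℂ) * (z 1 : ℂ))))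
          * Complex.exp (Complex.I * (((2*π*r*ξ.1) * Real.cos θ + (2*π*r*ξ.2) * Real.sin θ : ℝ) : ℂ)) := by
    apply intervalIntegral.integral_congr
    intro θ _
    simp only [hf (pt z r θ), pt_apply0, pt_apply1]
    apply Finset.sum_congr rfl
    intro ξ _
    have harg : (2 * (Real.pi:ℂ) * Complex.I * ((ξ.1 : ℂ) * ((z 0 + r * Real.cos θ : ℝ) : ℂ) + (ξ.2 : ℂ) * ((z 1 + r * Real.sin θ : ℝ) : ℂ)))
        = (2 * (Real.pi:ℂ) * Complex.I * ((ξ.1 : ℂ) * ((z 0 : ℝ) : ℂ) + (ξ.2 : ℂ) * ((z 1 : ℝ) : ℂ)))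
          + Complex.I * (((2*π*r*ξ.1) * Real.cos θ + (2*π*r*ξ.2) * Real.sin θ : ℝ) : ℂ) := by
      push_cast
      ring
    rw [harg, Complex.exp_add]
    ring
  rw [step1]
  rw [intervalIntegral.integral_finset_sum]
  swap
  · intro ξ _
    apply Continuous.intervalIntegrable
    fun_prop
  have step2 : ∀ ξ ∈ latticeE E,
      (∫ θ in (0:ℝ)..(2*π),
        (a ξ * Complex.exp (2 * Real.pi * Complex.I * ((ξ.1 : ℂ) * (z 0 : ℂ) + (ξ.2 : ℂ) * (z 1 : ℂ))))
        * Complex.exp (Complex.I * (((2*π*r*ξ.1) * Real.cos θ + (2*π*r*ξ.2) * Real.sin θ : ℝ) : ℂ)))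
      = (a ξ * Complex.exp (2 * Real.pi * Complex.I * ((ξ.1 : ℂ) * (z 0 : ℂ) + (ξ.2 : ℂ) * (z 1 : ℂ))))
        * Kc (2*π*r*Real.sqrt E) := by
    intro ξ hξ
    rw [intervalIntegral.integral_const_mul]
    congr 1
    rw [rot_lemma (2*π*r*ξ.1) (2*π*r*ξ.2)]
    congr 1
    have h1 : Real.sqrt (E : ℝ) ^ 2 = (E : ℝ) := Real.sq_sqrt (by positivity)
    have h2 : (2*π*r*(ξ.1:ℝ))^2 + (2*π*r*(ξ.2:ℝ))^2 = (2*π*r*Real.sqrt E)^2 := by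
      have h3 := latticeE_norm hξ
      calc (2*π*r*(ξ.1:ℝ))^2 + (2*π*r*(ξ.2:ℝ))^2
          = (2*π*r)^2 * (((ξ.1:ℝ))^2 + ((ξ.2:ℝ))^2) := by ring
        _ = (2*π*r)^2 * (Real.sqrt (E:ℝ))^2 := by rw [h3, h1]
        _ = (2*π*r*Real.sqrt E)^2 := by ring
    rw [h2, Real.sqrt_sq (by positivity)]
  rw [Finset.sum_congr rfl step2, ← Finset.sum_mul, ← hf z]

end CircleAvg

section Claims

variable {E : ℕ} {a : ℤ × ℤ → ℂ} {f : EuclideanSpace ℝ (Fin 2) → ℝ}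

lemma f_continuous
    (hf : ∀ x : EuclideanSpace ℝ (Fin 2),
      (f x : ℂ) = ∑ ξ ∈ latticeE E, a ξ * Complex.exp (2 * Real.pi * Complex.I *
        ((ξ.1 : ℂ) * (x 0 : ℂ) + (ξ.2 : ℂ) * (x 1 : ℂ)))) :
    Continuous f := by
  have hfe : f = fun x => (∑ ξ ∈ latticeE E, a ξ * Complex.exp (2 * Real.pi * Complex.I *
      ((ξ.1 : ℂ) * (x 0 : ℂ) + (ξ.2 : ℂ) * (x 1 : ℂ)))).re := by
    funext x
    have := congrArg Complex.re (hf x)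
    simpa using this
  rw [hfe]
  apply Complex.continuous_re.comp
  apply continuous_finset_sum
  intro ξ _
  apply Continuous.mul continuous_const
  apply Complex.continuous_exp.comp
  apply Continuous.mul continuous_const
  apply Continuous.add
  · exact Continuous.mul continuous_const
      (Complex.continuous_ofReal.comp (EuclideanSpace.proj (0 : Fin 2)).continuous)
  · exact Continuous.mul continuous_const
      (Complex.continuous_ofReal.comp (EuclideanSpace.proj (1 : Fin 2)).continuous)

lemma pt_continuous (x₀ : EuclideanSpace ℝ (Fin 2)) (r : ℝ) :
    Continuous fun θ => pt x₀ r θ := by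
  unfold pt
  apply (PiLp.continuous_toLp 2 _).comp
  apply continuous_pi
  intro i
  fin_cases i
  · exact continuous_const.add (continuous_const.mul Real.continuous_cos)
  · exact continuous_const.add (continuous_const.mul Real.continuous_sin)

lemma exists_zero
    (hf : ∀ x : EuclideanSpace ℝ (Fin 2),
      (f x : ℂ) = ∑ ξ ∈ latticeE E, a ξ * Complex.exp (2 * Real.pi * Complex.I *
        ((ξ.1 : ℂ) * (x 0 : ℂ) + (ξ.2 : ℂ) * (x 1 : ℂ))))
    (hE : 1 ≤ E) (w : EuclideanSpace ℝ (Fin 2)) :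
    ∃ x ∈ Metric.closedBall w (3/(2*π*Real.sqrt E)), f x = 0 := by
  set r₀ : ℝ := 3/(2*π*Real.sqrt E) with hr₀
  have hsE : 0 < Real.sqrt E := Real.sqrt_pos.mpr (by exact_mod_cast Nat.pos_of_ne_zero (by omega))
  have hr₀pos : 0 < r₀ := by positivity
  by_contra hcon
  push_neg at hcon
  have hcont : Continuous f := f_continuous hf
  -- the circle of radius r₀ is inside the closed ball
  have hmem : ∀ θ : ℝ, pt w r₀ θ ∈ Metric.closedBall w r₀ := by
    intro θ
    rw [Metric.mem_closedBall, dist_pt, _root_.abs_of_nonneg hr₀pos.le]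
  -- sign is constant
  have hsign : (∀ x ∈ Metric.closedBall w r₀, 0 < f x) ∨
      (∀ x ∈ Metric.closedBall w r₀, f x < 0) := by
    by_cases h1 : ∀ x ∈ Metric.closedBall w r₀, 0 < f x
    · exact Or.inl h1
    · right
      push_neg at h1
      obtain ⟨u, hu, hu'⟩ := h1
      have hune : f u < 0 := lt_of_le_of_ne hu' (hcon u hu)
      intro x hx
      by_contra hx'
      push_neg at hx'
      have hxpos : 0 < f x := lt_of_le_of_ne hx' (Ne.symm (hcon x hx))
      have := (convex_closedBall w r₀).isPreconnected.intermediate_value hu hx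
        hcont.continuousOn
      have h0 : (0:ℝ) ∈ Set.Icc (f u) (f x) := ⟨hune.le, hxpos.le⟩
      obtain ⟨y, hy, hy0⟩ := this h0
      exact hcon y hy hy0
  -- circle average
  have havg := circle_avg hf w r₀ hr₀pos.le
  have ht3 : 2*π*r₀*Real.sqrt E = 3 := by
    rw [hr₀]
    field_simp
  rw [ht3] at havg
  have hre := congrArg Complex.re havg
  simp only [Complex.ofReal_re, Complex.re_ofReal_mul] at hre
  -- hre : ∫ θ in 0..2π, f (pt w r₀ θ) = f w * (Kc 3).re
  have hgcont : Continuous fun θ => f (pt w r₀ θ) := hcont.comp (pt_continuous w r₀)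
  rcases hsign with hpos | hneg
  · have hApos : 0 < ∫ θ in (0:ℝ)..(2*π), f (pt w r₀ θ) := by
      apply intervalIntegral.intervalIntegral_pos_of_pos_on
        (hgcont.intervalIntegrable 0 (2*π))
      · intro θ _
        exact hpos _ (hmem θ)
      · positivity
    have hwpos : 0 < f w := hpos w (Metric.mem_closedBall_self hr₀pos.le)
    nlinarith [Kc3_re_neg, hre]
  · have hAneg : 0 < ∫ θ in (0:ℝ)..(2*π), (fun θ => -f (pt w r₀ θ)) θ := by
      apply intervalIntegral.intervalIntegral_pos_of_pos_on
        ((hgcont.neg).intervalIntegrable 0 (2*π))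
      · intro θ _
        simpa using hneg _ (hmem θ)
      · positivity
    rw [intervalIntegral.integral_neg] at hAneg
    have hwneg : f w < 0 := hneg w (Metric.mem_closedBall_self hr₀pos.le)
    nlinarith [Kc3_re_neg, hre]

lemma zero_on_circle
    (hf : ∀ x : EuclideanSpace ℝ (Fin 2),
      (f x : ℂ) = ∑ ξ ∈ latticeE E, a ξ * Complex.exp (2 * Real.pi * Complex.I *
        ((ξ.1 : ℂ) * (x 0 : ℂ) + (ξ.2 : ℂ) * (x 1 : ℂ))))
    (x₀ : EuclideanSpace ℝ (Fin 2)) (h0 : f x₀ = 0) {r : ℝ} (hr : 0 < r) :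
    ∃ q : EuclideanSpace ℝ (Fin 2), dist q x₀ = r ∧ f q = 0 := by
  have hcont : Continuous f := f_continuous hf
  have hgcont : Continuous fun θ => f (pt x₀ r θ) := hcont.comp (pt_continuous x₀ r)
  have havg := circle_avg hf x₀ r hr.le
  rw [h0] at havg
  norm_num at havg
  -- havg : ∫ θ in 0..2π, f (pt x₀ r θ) = 0  (as a real, via coercion)
  have hA : (∫ θ in (0:ℝ)..(2*π), f (pt x₀ r θ)) = 0 := by exact_mod_cast havg
  have hθ : ∃ θ : ℝ, f (pt x₀ r θ) = 0 := by
    by_contra hno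
    push_neg at hno
    have hsign : (∀ θ : ℝ, 0 < f (pt x₀ r θ)) ∨ (∀ θ : ℝ, f (pt x₀ r θ) < 0) := by
      by_cases h1 : ∀ θ : ℝ, 0 < f (pt x₀ r θ)
      · exact Or.inl h1
      · right
        push_neg at h1
        obtain ⟨u, hu⟩ := h1
        have hune : f (pt x₀ r u) < 0 := lt_of_le_of_ne hu (hno u)
        intro θ
        by_contra hθ'
        push_neg at hθ'
        have hθpos : 0 < f (pt x₀ r θ) := lt_of_le_of_ne hθ' (Ne.symm (hno θ))
        have := intermediate_value_uIcc (a := u) (b := θ)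
          (f := fun θ => f (pt x₀ r θ)) hgcont.continuousOn
        have h0' : (0:ℝ) ∈ Set.uIcc (f (pt x₀ r u)) (f (pt x₀ r θ)) := by
          rw [Set.mem_uIcc]
          left
          exact ⟨hune.le, hθpos.le⟩
        obtain ⟨y, _, hy0⟩ := this h0'
        exact hno y hy0
    rcases hsign with hpos | hneg
    · have : 0 < ∫ θ in (0:ℝ)..(2*π), f (pt x₀ r θ) := by
        apply intervalIntegral.intervalIntegral_pos_of_pos_on
          (hgcont.intervalIntegrable 0 (2*π))
        · intro θ _; exact hpos θ
        · positivity
      linarith [hA]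
    · have : 0 < ∫ θ in (0:ℝ)..(2*π), (fun θ => -f (pt x₀ r θ)) θ := by
        apply intervalIntegral.intervalIntegral_pos_of_pos_on
          ((hgcont.neg).intervalIntegrable 0 (2*π))
        · intro θ _; simpa using hneg θ
        · positivity
      rw [intervalIntegral.integral_neg] at this
      linarith [hA]
  obtain ⟨θ, hθ0⟩ := hθ
  exact ⟨pt x₀ r θ, by rw [dist_pt, _root_.abs_of_nonneg hr.le], hθ0⟩

end Claims

section LocalLength

variable {E : ℕ} {a : ℤ × ℤ → ℂ} {f : EuclideanSpace ℝ (Fin 2) → ℝ}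

lemma local_length
    (hf : ∀ x : EuclideanSpace ℝ (Fin 2),
      (f x : ℂ) = ∑ ξ ∈ latticeE E, a ξ * Complex.exp (2 * Real.pi * Complex.I *
        ((ξ.1 : ℂ) * (x 0 : ℂ) + (ξ.2 : ℂ) * (x 1 : ℂ))))
    (x₀ : EuclideanSpace ℝ (Fin 2)) (h0 : f x₀ = 0) {ρ : ℝ} (hρ : 0 < ρ) :
    ENNReal.ofReal ρ ≤
      μH[1] {x : EuclideanSpace ℝ (Fin 2) | x ∈ Metric.ball x₀ ρ ∧ f x = 0} := by
  set S := {x : EuclideanSpace ℝ (Fin 2) | x ∈ Metric.ball x₀ ρ ∧ f x = 0} with hS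
  have himg : Set.Ioo (0:ℝ) ρ ⊆ (fun x => dist x x₀) '' S := by
    intro r hr
    obtain ⟨q, hq1, hq2⟩ := zero_on_circle hf x₀ h0 hr.1
    exact ⟨q, ⟨by rw [Metric.mem_ball, hq1]; exact hr.2, hq2⟩, hq1⟩
  calc ENNReal.ofReal ρ = μH[1] (Set.Ioo (0:ℝ) ρ) := by
        rw [MeasureTheory.hausdorffMeasure_real, Real.volume_Ioo]
        norm_num
    _ ≤ μH[1] ((fun x => dist x x₀) '' S) := measure_mono himg
    _ ≤ (1:ℝ≥0)^(1:ℝ) * μH[1] S :=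
        (LipschitzWith.dist_left x₀).hausdorffMeasure_image_le (by norm_num) S
    _ = μH[1] S := by simp

end LocalLength

noncomputable def gridpt (z : EuclideanSpace ℝ (Fin 2)) (c : ℝ) (p : ℕ × ℕ) :
    EuclideanSpace ℝ (Fin 2) :=
  WithLp.toLp 2 ![z 0 + c * p.1, z 1 + c * p.2]

lemma dist_gridpt (z : EuclideanSpace ℝ (Fin 2)) (c : ℝ) (p q : ℕ × ℕ) :
    dist (gridpt z c p) (gridpt z c q)
      = Real.sqrt (c^2 * (((p.1:ℝ) - q.1)^2 + ((p.2:ℝ) - q.2)^2)) := by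
  rw [EuclideanSpace.dist_eq, Fin.sum_univ_two]
  unfold gridpt
  simp only [Real.dist_eq, PiLp.toLp_apply, Matrix.cons_val_zero, Matrix.cons_val_one, Matrix.head_cons]
  rw [_root_.sq_abs, _root_.sq_abs]
  congr 1
  ring

lemma dist_gridpt_self (z : EuclideanSpace ℝ (Fin 2)) (c : ℝ) (p : ℕ × ℕ) :
    dist (gridpt z c p) z
      = Real.sqrt (c^2 * (((p.1:ℝ))^2 + ((p.2:ℝ))^2)) := by
  rw [EuclideanSpace.dist_eq, Fin.sum_univ_two]
  unfold gridpt
  simp only [Real.dist_eq, PiLp.toLp_apply, Matrix.cons_val_zero, Matrix.cons_val_one, Matrix.head_cons]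
  rw [_root_.sq_abs, _root_.sq_abs]
  congr 1
  ring

lemma grid_sep {p q : ℕ × ℕ} (h : p ≠ q) :
    (1:ℝ) ≤ ((p.1:ℝ) - q.1)^2 + ((p.2:ℝ) - q.2)^2 := by
  have h' : p.1 ≠ q.1 ∨ p.2 ≠ q.2 := by
    by_contra hc
    push_neg at hc
    exact h (Prod.ext hc.1 hc.2)
  rcases h' with h1 | h1
  · have : (1:ℝ) ≤ ((p.1:ℝ) - q.1)^2 := by
      have hz : ((p.1:ℤ) - (q.1:ℤ)) ≠ 0 := by
        intro hzz; apply h1; omega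
      have h2 : (1:ℤ) ≤ ((p.1:ℤ) - q.1)^2 := by
        rcases lt_or_gt_of_ne hz with hlt | hgt <;> nlinarith
      have : ((1:ℤ):ℝ) ≤ ((((p.1:ℤ) - q.1)^2 : ℤ) : ℝ) := by exact_mod_cast h2
      push_cast at this
      linarith
    nlinarith [sq_nonneg ((p.2:ℝ) - q.2)]
  · have : (1:ℝ) ≤ ((p.2:ℝ) - q.2)^2 := by
      have hz : ((p.2:ℤ) - (q.2:ℤ)) ≠ 0 := by
        intro hzz; apply h1; omega
      have h2 : (1:ℤ) ≤ ((p.2:ℤ) - q.2)^2 := by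
        rcases lt_or_gt_of_ne hz with hlt | hgt <;> nlinarith
      have : ((1:ℤ):ℝ) ≤ ((((p.2:ℤ) - q.2)^2 : ℤ) : ℝ) := by exact_mod_cast h2
      push_cast at this
      linarith
    nlinarith [sq_nonneg ((p.1:ℝ) - q.1)]

/-- Lower bound in the small-scale Yau conjecture on the torus: for every `ε > 0` there is
`c = c(ε) > 0` such that for every `E ≥ 2`, every toral eigenfunction `f` of frequency `E`,
every radius `E^{-1/2+ε} ≤ s ≤ 1` and every centre `z`, the nodal length of `f` in `B(z,s)`
is at least `c s² √E`. -/
theorem nodal_length_lower_bound :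
    ∀ ε : ℝ, 0 < ε → ∃ c : ℝ, 0 < c ∧
      ∀ E : ℕ, 2 ≤ E →
        ∀ f : EuclideanSpace ℝ (Fin 2) → ℝ, IsToralEigenfunction E f →
          ∀ s : ℝ, (E : ℝ) ^ (-(1 : ℝ) / 2 + ε) ≤ s → s ≤ 1 →
            ∀ z : EuclideanSpace ℝ (Fin 2),
              ENNReal.ofReal (c * s ^ 2 * Real.sqrt E)
                ≤ μH[1] {x : EuclideanSpace ℝ (Fin 2) | x ∈ ball z s ∧ f x = 0} := by
  intro ε hε
  refine ⟨1/256, by norm_num, ?_⟩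
  intro E hE f htoral s hs1 hs2 z
  obtain ⟨a, -, -, hf⟩ := htoral
  have hcont : Continuous f := f_continuous hf
  have hE1 : 1 ≤ E := by omega
  have hEpos : (0:ℝ) < E := by exact_mod_cast Nat.pos_of_ne_zero (by omega)
  have hE1r : (1:ℝ) ≤ E := by exact_mod_cast hE1
  have hsE : 0 < Real.sqrt E := Real.sqrt_pos.mpr hEpos
  have hsEsq : Real.sqrt E * Real.sqrt E = E := Real.mul_self_sqrt hEpos.le
  have hspos : 0 < s := lt_of_lt_of_le (Real.rpow_pos_of_pos hEpos _) hs1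
  -- `1/√E ≤ s`
  have hsE1 : 1/Real.sqrt E ≤ s := by
    have h1 : (E:ℝ) ^ (-(1:ℝ)/2) ≤ (E:ℝ) ^ (-(1:ℝ)/2 + ε) :=
      Real.rpow_le_rpow_of_exponent_le hE1r (by linarith)
    have h2 : (E:ℝ) ^ (-(1:ℝ)/2) = 1/Real.sqrt E := by
      rw [show (-(1:ℝ)/2) = -(1/2) by ring, Real.rpow_neg hEpos.le, ← Real.sqrt_eq_rpow]
      rw [one_div]
    linarith [le_trans h1 hs1, h2.symm.le]
  have hs_sqE : 1 ≤ s * Real.sqrt E := by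
    rw [div_le_iff₀ hsE] at hsE1
    linarith
  set r₀ : ℝ := 3/(2*π*Real.sqrt E) with hr₀def
  have hr₀pos : 0 < r₀ := by positivity
  have hr₀le : r₀ ≤ 1/(2*Real.sqrt E) := by
    rw [hr₀def, div_le_div_iff₀ (by positivity) (by positivity)]
    nlinarith [Real.pi_gt_three, hsE]
  set ρ₁ : ℝ := 1/Real.sqrt E with hρ₁def
  have hρ₁pos : 0 < ρ₁ := by positivity
  by_cases hcase : s * Real.sqrt E ≤ 16
  · -- single ball case
    obtain ⟨x₀, hx₀ball, hx₀⟩ := exists_zero hf hE1 z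
    have hr₀s : r₀ ≤ s/2 := by
      have : 1/(2*Real.sqrt E) = ρ₁/2 := by rw [hρ₁def]; ring
      rw [this] at hr₀le
      linarith [hsE1]
    have hρpos : 0 < s - r₀ := by linarith
    have hloc := local_length hf x₀ hx₀ hρpos
    have hsub : {x : EuclideanSpace ℝ (Fin 2) | x ∈ ball x₀ (s - r₀) ∧ f x = 0}
        ⊆ {x : EuclideanSpace ℝ (Fin 2) | x ∈ ball z s ∧ f x = 0} := by
      rintro x ⟨hx1, hx2⟩
      refine ⟨?_, hx2⟩
      rw [mem_ball] at hx1 ⊢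
      have hd : dist x₀ z ≤ r₀ := mem_closedBall.mp hx₀ball
      calc dist x z ≤ dist x x₀ + dist x₀ z := dist_triangle _ _ _
        _ < (s - r₀) + r₀ := by linarith
        _ = s := by ring
    calc ENNReal.ofReal (1/256 * s^2 * Real.sqrt E)
        ≤ ENNReal.ofReal (s - r₀) := by
          apply ENNReal.ofReal_le_ofReal
          nlinarith [hs_sqE, hcase, hspos, hr₀s]
      _ ≤ μH[1] {x : EuclideanSpace ℝ (Fin 2) | x ∈ ball x₀ (s - r₀) ∧ f x = 0} := hloc
      _ ≤ μH[1] {x : EuclideanSpace ℝ (Fin 2) | x ∈ ball z s ∧ f x = 0} :=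
          measure_mono hsub
  · -- grid case
    push_neg at hcase
    set n : ℕ := ⌊s * Real.sqrt E / 8⌋₊ with hndef
    have hn_le : (n:ℝ) ≤ s * Real.sqrt E / 8 := Nat.floor_le (by positivity)
    have hn_ge : s * Real.sqrt E / 16 ≤ (n:ℝ) := by
      have := Nat.sub_one_lt_floor (s * Real.sqrt E / 8)
      rw [← hndef] at this
      linarith
    set δ : ℝ := 4/Real.sqrt E with hδdef
    have hδpos : 0 < δ := by positivity
    set P : Finset (ℕ × ℕ) := Finset.Icc 1 n ×ˢ Finset.Icc 1 n with hPdef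
    -- choose a zero near each grid point
    have hzero : ∀ p : ℕ × ℕ, ∃ x ∈ closedBall (gridpt z δ p) r₀, f x = 0 :=
      fun p => exists_zero hf hE1 (gridpt z δ p)
    choose xp hxp_ball hxp_zero using hzero
    set T : ℕ × ℕ → Set (EuclideanSpace ℝ (Fin 2)) :=
      fun p => {x : EuclideanSpace ℝ (Fin 2) | x ∈ ball (xp p) ρ₁ ∧ f x = 0} with hTdef
    have hTmeas : ∀ p : ℕ × ℕ, MeasurableSet (T p) := by
      intro p
      have : T p = ball (xp p) ρ₁ ∩ f ⁻¹' {0} := by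
        ext x
        simp [hTdef, Set.mem_setOf_eq]
      rw [this]
      exact measurableSet_ball.inter (hcont.measurable (measurableSet_singleton 0))
    -- grid separation of the chosen zeros
    have hxp_dist : ∀ p q : ℕ × ℕ, p ≠ q → 3/Real.sqrt E ≤ dist (xp p) (xp q) := by
      intro p q hpq
      have hg : δ ≤ dist (gridpt z δ p) (gridpt z δ q) := by
        rw [dist_gridpt]
        have h1 : δ^2 * 1 ≤ δ^2 * (((p.1:ℝ) - q.1)^2 + ((p.2:ℝ) - q.2)^2) := by
          apply mul_le_mul_of_nonneg_left (grid_sep hpq) (by positivity)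
        calc δ = Real.sqrt (δ^2 * 1) := by
              rw [mul_one, Real.sqrt_sq hδpos.le]
          _ ≤ _ := Real.sqrt_le_sqrt h1
      have htri : dist (gridpt z δ p) (gridpt z δ q)
          ≤ r₀ + dist (xp p) (xp q) + r₀ := by
        calc dist (gridpt z δ p) (gridpt z δ q)
            ≤ dist (gridpt z δ p) (xp p) + dist (xp p) (xp q) + dist (xp q) (gridpt z δ q) :=
              dist_triangle4 _ _ _ _
          _ ≤ r₀ + dist (xp p) (xp q) + r₀ := by
              have h1 : dist (xp p) (gridpt z δ p) ≤ r₀ := mem_closedBall.mp (hxp_ball p)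
              have h2 : dist (xp q) (gridpt z δ q) ≤ r₀ := mem_closedBall.mp (hxp_ball q)
              rw [dist_comm (gridpt z δ p) (xp p)]
              linarith
      have : δ - 2*r₀ ≤ dist (xp p) (xp q) := by linarith
      have hnum : 3/Real.sqrt E ≤ δ - 2*r₀ := by
        rw [hδdef]
        have : 2*r₀ ≤ 1/Real.sqrt E := by
          have := hr₀le
          rw [show 1/(2*Real.sqrt E) = (1/Real.sqrt E)/2 by ring] at this
          linarith
        have h4 : (4:ℝ)/Real.sqrt E - 1/Real.sqrt E = 3/Real.sqrt E := by ring
        linarith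
      linarith
    have hdisj : (P : Set (ℕ × ℕ)).PairwiseDisjoint T := by
      intro p _ q _ hpq
      have hballs : Disjoint (ball (xp p) ρ₁) (ball (xp q) ρ₁) := by
        apply ball_disjoint_ball
        have := hxp_dist p q hpq
        have h2 : ρ₁ + ρ₁ = 2/Real.sqrt E := by rw [hρ₁def]; ring
        rw [h2]
        calc (2:ℝ)/Real.sqrt E ≤ 3/Real.sqrt E := by
              have h1 : (0:ℝ) < 1/Real.sqrt E := by positivity
              have h2 : (2:ℝ)/Real.sqrt E + 1/Real.sqrt E = 3/Real.sqrt E := by ring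
              linarith
          _ ≤ dist (xp p) (xp q) := this
      exact Set.disjoint_of_subset (fun x hx => hx.1) (fun x hx => hx.1) hballs
    -- each piece lies in the big ball
    have hsubT : ∀ p ∈ P, T p ⊆ {x : EuclideanSpace ℝ (Fin 2) | x ∈ ball z s ∧ f x = 0} := by
      intro p hp
      rintro x ⟨hx1, hx2⟩
      refine ⟨?_, hx2⟩
      rw [mem_ball] at hx1 ⊢
      have hp1 : p.1 ≤ n := by
        rw [hPdef, Finset.mem_product, Finset.mem_Icc, Finset.mem_Icc] at hp
        exact hp.1.2
      have hp2 : p.2 ≤ n := by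
        rw [hPdef, Finset.mem_product, Finset.mem_Icc, Finset.mem_Icc] at hp
        exact hp.2.2
      have hgz : dist (gridpt z δ p) z ≤ 1.5 * δ * n := by
        rw [dist_gridpt_self]
        have hb : δ^2 * (((p.1:ℝ))^2 + ((p.2:ℝ))^2) ≤ (1.5 * δ * n)^2 := by
          have h1 : ((p.1:ℝ)) ≤ n := by exact_mod_cast hp1
          have h2 : ((p.2:ℝ)) ≤ n := by exact_mod_cast hp2
          have h1' : (0:ℝ) ≤ p.1 := Nat.cast_nonneg _
          have h2' : (0:ℝ) ≤ p.2 := Nat.cast_nonneg _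
          have hp1sq : ((p.1:ℝ))^2 ≤ ((n:ℝ))^2 := by nlinarith
          have hp2sq : ((p.2:ℝ))^2 ≤ ((n:ℝ))^2 := by nlinarith
          have hmul : δ^2 * (((p.1:ℝ))^2 + ((p.2:ℝ))^2) ≤ δ^2 * (2*((n:ℝ))^2) :=
            mul_le_mul_of_nonneg_left (by linarith) (by positivity)
          nlinarith [sq_nonneg (δ*(n:ℝ))]
        calc Real.sqrt (δ^2 * (((p.1:ℝ))^2 + ((p.2:ℝ))^2))
            ≤ Real.sqrt ((1.5 * δ * n)^2) := Real.sqrt_le_sqrt hb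
          _ = 1.5 * δ * n := Real.sqrt_sq (by positivity)
      have hδn : 1.5 * δ * n ≤ 0.75 * s := by
        have : 1.5 * δ * n ≤ 1.5 * (4/Real.sqrt E) * (s * Real.sqrt E / 8) := by
          rw [← hδdef]
          apply mul_le_mul_of_nonneg_left hn_le (by positivity)
        have heq : 1.5 * (4/Real.sqrt E) * (s * Real.sqrt E / 8) = 0.75 * s := by
          field_simp
          ring
        linarith
      have hsmall : ρ₁ + r₀ ≤ 0.1 * s := by
        have h1 : ρ₁ + r₀ ≤ 1.5/Real.sqrt E := by
          have := hr₀le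
          rw [hρ₁def]
          rw [show 1/(2*Real.sqrt E) = 0.5 * (1/Real.sqrt E) by ring] at this
          have : r₀ ≤ 0.5/Real.sqrt E := by
            calc r₀ ≤ 0.5 * (1/Real.sqrt E) := this
              _ = 0.5/Real.sqrt E := by ring
          have h15 : (1:ℝ)/Real.sqrt E + 0.5/Real.sqrt E = 1.5/Real.sqrt E := by ring
          linarith
        have h2 : (1.5:ℝ)/Real.sqrt E ≤ 0.1 * s := by
          rw [div_le_iff₀ hsE]
          nlinarith [hcase]
        linarith
      have hxz : dist x z ≤ dist x (xp p) + dist (xp p) (gridpt z δ p) + dist (gridpt z δ p) z :=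
        dist_triangle4 _ _ _ _
      have hdx : dist x (xp p) < ρ₁ := hx1
      have hdp : dist (xp p) (gridpt z δ p) ≤ r₀ := mem_closedBall.mp (hxp_ball p)
      calc dist x z ≤ dist x (xp p) + dist (xp p) (gridpt z δ p) + dist (gridpt z δ p) z := hxz
        _ < ρ₁ + r₀ + 1.5 * δ * n := by linarith
        _ ≤ 0.1 * s + 0.75 * s := by linarith
        _ ≤ s := by linarith
    -- put it together
    have hcard : P.card = n * n := by
      rw [hPdef, Finset.card_product, Nat.card_Icc]
      simp
    have hunion : μH[1] (⋃ p ∈ P, T p) = ∑ p ∈ P, μH[1] (T p) :=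
      measure_biUnion_finset hdisj (fun p _ => hTmeas p)
    have hsum_ge : (P.card : ℝ≥0∞) * ENNReal.ofReal ρ₁ ≤ ∑ p ∈ P, μH[1] (T p) := by
      calc (P.card : ℝ≥0∞) * ENNReal.ofReal ρ₁ = ∑ _p ∈ P, ENNReal.ofReal ρ₁ := by
            rw [Finset.sum_const, nsmul_eq_mul]
        _ ≤ ∑ p ∈ P, μH[1] (T p) :=
            Finset.sum_le_sum (fun p _ => local_length hf (xp p) (hxp_zero p) hρ₁pos)
    have hfinal1 : μH[1] (⋃ p ∈ P, T p)
        ≤ μH[1] {x : EuclideanSpace ℝ (Fin 2) | x ∈ ball z s ∧ f x = 0} := by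
      apply measure_mono
      exact Set.iUnion₂_subset hsubT
    have hmain : ENNReal.ofReal (1/256 * s^2 * Real.sqrt E)
        ≤ (P.card : ℝ≥0∞) * ENNReal.ofReal ρ₁ := by
      rw [hcard]
      have : ((n*n : ℕ) : ℝ≥0∞) * ENNReal.ofReal ρ₁ = ENNReal.ofReal ((n*n : ℕ) * ρ₁) := by
        rw [ENNReal.ofReal_mul (by positivity), ENNReal.ofReal_natCast]
      rw [this]
      apply ENNReal.ofReal_le_ofReal
      push_cast
      have hA : (0:ℝ) ≤ s * Real.sqrt E / 16 := by positivity
      have hmm : (s * Real.sqrt E / 16) * (s * Real.sqrt E / 16) ≤ (n:ℝ) * (n:ℝ) :=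
        mul_le_mul hn_ge hn_ge hA (Nat.cast_nonneg _)
      have hmm2 : (s * Real.sqrt E / 16) * (s * Real.sqrt E / 16) * ρ₁ ≤ (n:ℝ) * (n:ℝ) * ρ₁ :=
        mul_le_mul_of_nonneg_right hmm hρ₁pos.le
      have hkey : (s * Real.sqrt E / 16) * (s * Real.sqrt E / 16) * ρ₁
          = 1/256 * s^2 * Real.sqrt E := by
        rw [hρ₁def]
        field_simp
        ring
      linarith
    calc ENNReal.ofReal (1/256 * s^2 * Real.sqrt E)
        ≤ (P.card : ℝ≥0∞) * ENNReal.ofReal ρ₁ := hmain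
      _ ≤ ∑ p ∈ P, μH[1] (T p) := hsum_ge
      _ = μH[1] (⋃ p ∈ P, T p) := hunion.symm
      _ ≤ μH[1] {x : EuclideanSpace ℝ (Fin 2) | x ∈ ball z s ∧ f x = 0} := hfinal1
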